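/- Let A be the (d+1)×(d+1) matrix obtained from Eᵀ D E by replacing its first column (the column of index j = 0) with the vector Eᵀ D f, where f = (f_1, …, f_N) ∈ ℝ^N. Then det(A) = Σ_{i_0=1}^N w_{i_0} f_{i_0} · Σ_{i_1=1}^N ⋯ Σ_{i_d=1}^N w_{i_1} ⋯ w_{i_d} · (x_{i_1} − x)(x_{i_2} − x)² ⋯ (x_{i_d} − x)^d · ∏_{0 ≤ k < l ≤ d} (x_{i_l} − x_{i_k}). -/

import Mathlib

open Matrix

/-- explicit expansion of the determinant of the matrix obtained
from `Eᵀ D E` by replacing its first column (index `j = 0`) with `Eᵀ D f`. -/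
theorem det_cramer_numerator_explicit
    (d N : ℕ) (hN : d + 1 ≤ N) (x : ℝ) (xs : Fin N → ℝ) (w : Fin N → ℝ)
    (f : Fin N → ℝ)
    (E : Matrix (Fin N) (Fin (d + 1)) ℝ)
    (hE : ∀ i j, E i j = (xs i - x) ^ (j : ℕ))
    (D : Matrix (Fin N) (Fin N) ℝ) (hD : D = Matrix.diagonal w)
    (A : Matrix (Fin (d + 1)) (Fin (d + 1)) ℝ)
    (hA : A = (Eᵀ * D * E).updateCol 0 ((Eᵀ * D).mulVec f)) :
    A.det =
      ∑ i0 : Fin N, w i0 * f i0 *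
        ∑ τ : Fin d → Fin N,
          (∏ k, w (τ k)) * (∏ k : Fin d, (xs (τ k) - x) ^ ((k : ℕ) + 1)) *
            ∏ k : Fin (d + 1), ∏ l ∈ Finset.Ioi k,
              (xs ((Fin.cons i0 τ : Fin (d + 1) → Fin N) l) -
                xs ((Fin.cons i0 τ : Fin (d + 1) → Fin N) k)) := by
  classical
  set c : Fin N → Fin (d + 1) → ℝ :=
    fun i l => w i * (if l = 0 then f i else (xs i - x) ^ (l : ℕ)) with hc
  set v : Fin N → Fin (d + 1) → ℝ := fun i j => (xs i - x) ^ (j : ℕ) with hv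
  have hED : Eᵀ * D = Matrix.of fun (j : Fin (d+1)) (i : Fin N) => (xs i - x) ^ (j : ℕ) * w i := by
    subst hD
    ext j i
    simp [Matrix.mul_diagonal, hE]
  have hAt : ∀ l : Fin (d + 1), (Aᵀ) l = ∑ i : Fin N, c i l • v i := by
    intro l
    funext j
    simp only [hA, transpose_apply, updateCol_apply]
    by_cases h0 : l = 0
    · simp only [h0, if_pos rfl, if_true, Matrix.mulVec, dotProduct, hED, Matrix.of_apply,
        Finset.sum_apply, Pi.smul_apply, smul_eq_mul, hc, hv]
      refine Finset.sum_congr rfl fun i _ => ?_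
      ring
    · simp only [if_neg h0, Matrix.mul_apply, hED, Matrix.of_apply, hE,
        Finset.sum_apply, Pi.smul_apply, smul_eq_mul, hc, hv]
      refine Finset.sum_congr rfl fun i _ => ?_
      ring
  rw [← Matrix.det_transpose]
  have hAt' : (Aᵀ : Matrix (Fin (d+1)) (Fin (d+1)) ℝ) =
      Matrix.of fun l => ∑ i : Fin N, c i l • v i := by
    funext l j
    rw [show (Aᵀ) l j = (∑ i : Fin N, c i l • v i) j from by rw [hAt l]]
    rfl
  rw [hAt']
  -- expand by multilinearity
  have expand : Matrix.det (Matrix.of fun l : Fin (d+1) => ∑ i : Fin N, c i l • v i)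
      = ∑ σ : Fin (d+1) → Fin N,
          (∏ l, c (σ l) l) * Matrix.det (Matrix.of fun l => v (σ l)) := by
    have hms := MultilinearMap.map_sum
      (f := (Matrix.detRowAlternating (R := ℝ) (n := Fin (d+1))).toMultilinearMap)
      (g := fun (l : Fin (d+1)) (i : Fin N) => c i l • v i)
    refine hms.trans (Finset.sum_congr rfl fun σ _ => ?_)
    have hsm := (Matrix.detRowAlternating (R := ℝ) (n := Fin (d+1))).toMultilinearMap.map_smul_univ
      (fun l : Fin (d+1) => c (σ l) l) (fun l => v (σ l))
    rw [smul_eq_mul] at hsm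
    exact hsm
  rw [expand]
  -- vandermonde determinant
  have hvd : ∀ σ : Fin (d+1) → Fin N,
      Matrix.det (Matrix.of fun l => v (σ l))
        = ∏ k : Fin (d+1), ∏ l ∈ Finset.Ioi k, (xs (σ l) - xs (σ k)) := by
    intro σ
    have : (Matrix.of fun l => v (σ l)) = Matrix.vandermonde (fun l => xs (σ l) - x) := by
      funext l j; rfl
    rw [this, Matrix.det_vandermonde]
    refine Finset.prod_congr rfl fun k _ => Finset.prod_congr rfl fun l _ => ?_
    ring
  simp only [hvd]
  -- reindex the sum via Fin.cons
  rw [← Equiv.sum_comp (Fin.consEquiv (fun _ : Fin (d+1) => Fin N))]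
  rw [Fintype.sum_prod_type]
  refine Finset.sum_congr rfl fun i0 _ => ?_
  rw [Finset.mul_sum]
  refine Finset.sum_congr rfl fun τ _ => ?_
  have hcons : (Fin.consEquiv (fun _ : Fin (d+1) => Fin N)) (i0, τ) = Fin.cons i0 τ := rfl
  rw [hcons]
  have hprod : (∏ l : Fin (d+1), c ((Fin.cons i0 τ : Fin (d+1) → Fin N) l) l)
      = (w i0 * f i0) * ∏ k : Fin d, (w (τ k) * (xs (τ k) - x) ^ ((k : ℕ) + 1)) := by
    rw [Fin.prod_univ_succ]
    have h1 : c ((Fin.cons i0 τ : Fin (d+1) → Fin N) 0) 0 = w i0 * f i0 := by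
      simp [hc]
    have h2 : ∀ k : Fin d, c ((Fin.cons i0 τ : Fin (d+1) → Fin N) k.succ) k.succ
        = w (τ k) * (xs (τ k) - x) ^ ((k : ℕ) + 1) := by
      intro k
      simp [hc, Fin.cons_succ, Fin.succ_ne_zero k, Fin.val_succ]
    rw [h1]
    exact congrArg _ (Finset.prod_congr rfl fun k _ => h2 k)
  rw [hprod, Finset.prod_mul_distrib]
  ring
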